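/- Let x : Fin n → ℝ be nondecreasing and let indices a ≤ b be such that x(k+1) − x(k) ≤ 1 for all a ≤ k < b, x(a) − x(a−1) > 1 if a > 0, and x(b+1) − x(b) > 1 if b + 1 < n (i.e., the index interval [a, b] is a connected component). Define the restricted configuration y : Fin (b−a+1) → ℝ by y(k) = x(a+k), and let T' denote the HK update on configurations of length b−a+1. Then for every index i with a ≤ i ≤ b, T(x)(i) = T'(y)(i − a); that is, the HK update of a point depends only on the points in its connected component. -/

import Mathlib

/-- The Hegselmann–Krause update with radius `R = 1` on configurations of `n` points. -/
noncomputable def hkUpdate {n : ℕ} (x : Fin n → ℝ) : Fin n → ℝ := fun i =>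
  (∑ j ∈ Finset.univ.filter (fun j => |x j - x i| ≤ 1), x j) /
    ((Finset.univ.filter (fun j : Fin n => |x j - x i| ≤ 1)).card : ℝ)

lemma hk_aux {n m : ℕ} (x : Fin n → ℝ) (y : Fin m → ℝ) (i : Fin n) (i' : Fin m)
    (e : Fin m ↪ Fin n) (he : ∀ k, y k = x (e k)) (hei : e i' = i)
    (hS : ∀ j : Fin n, |x j - x i| ≤ 1 → ∃ k, e k = j) :
    hkUpdate x i = hkUpdate y i' := by
  have hyi : y i' = x i := by rw [he, hei]
  have hset : Finset.univ.filter (fun j : Fin n => |x j - x i| ≤ 1)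
      = (Finset.univ.filter (fun k : Fin m => |y k - y i'| ≤ 1)).map e := by
    ext j
    simp only [Finset.mem_filter, Finset.mem_univ, true_and, Finset.mem_map]
    constructor
    · intro hj
      obtain ⟨k, rfl⟩ := hS j hj
      exact ⟨k, by rw [he k, hyi]; exact hj, rfl⟩
    · rintro ⟨k, hk, rfl⟩
      rw [he k, hyi] at hk
      exact hk
  unfold hkUpdate
  rw [hset, Finset.sum_map, Finset.card_map]
  congr 1
  exact Finset.sum_congr rfl (fun k _ => (he k).symm)

/-- If the index interval `[a, b]` is a connected component of a nondecreasing
configuration `x` (consecutive gaps within `[a, b]` are at most `1`, and the gaps at the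
boundary exceed `1`), then on `[a, b]` the HK update of `x` agrees with the HK update of
the restricted configuration `y k = x (a + k)` of length `b - a + 1`: the update of a
point depends only on the points in its connected component. -/
theorem hkUpdate_restrict_component {n : ℕ} (x : Fin n → ℝ) (hx : Monotone x)
    (a b : Fin n) (hab : (a : ℕ) ≤ b)
    (hin : ∀ k : ℕ, (a : ℕ) ≤ k → (hkb : k < (b : ℕ)) →
      x ⟨k + 1, by have := b.isLt; omega⟩ - x ⟨k, by have := b.isLt; omega⟩ ≤ 1)
    (hleft : ∀ _ : 0 < (a : ℕ), x a - x ⟨(a : ℕ) - 1, by have := a.isLt; omega⟩ > 1)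
    (hright : ∀ hb : (b : ℕ) + 1 < n, x ⟨(b : ℕ) + 1, hb⟩ - x b > 1) :
    ∀ i : Fin n, (hai : (a : ℕ) ≤ i) → (hib : (i : ℕ) ≤ b) →
      hkUpdate x i =
        hkUpdate (fun k : Fin ((b : ℕ) - (a : ℕ) + 1) =>
            x ⟨(a : ℕ) + (k : ℕ), by have := k.isLt; have := b.isLt; omega⟩)
          ⟨(i : ℕ) - (a : ℕ), by omega⟩ := by
  intro i hai hib
  have hbn := b.isLt
  refine hk_aux x _ i _
    ⟨fun k : Fin ((b : ℕ) - (a : ℕ) + 1) =>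
      (⟨(a : ℕ) + (k : ℕ), by have := k.isLt; omega⟩ : Fin n), ?_⟩
    (fun k => rfl) ?_ ?_
  · intro k l h
    have hh := congrArg Fin.val h
    simp only at hh
    exact Fin.ext (by omega)
  · exact Fin.ext (by show (a : ℕ) + ((i : ℕ) - (a : ℕ)) = i; omega)
  · intro j hj
    have hja : (a : ℕ) ≤ j := by
      by_contra h
      push_neg at h
      have h0 : 0 < (a : ℕ) := by omega
      have h1 := hleft h0
      have h2 : x j ≤ x ⟨(a : ℕ) - 1, by omega⟩ := hx (Fin.le_def.mpr (by simp; omega))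
      have h3 : x a ≤ x i := hx (Fin.le_def.mpr hai)
      have h4 := abs_le.mp hj
      linarith
    have hjb : (j : ℕ) ≤ b := by
      by_contra h
      push_neg at h
      have hb1 : (b : ℕ) + 1 < n := by have := j.isLt; omega
      have h1 := hright hb1
      have h2 : x ⟨(b : ℕ) + 1, hb1⟩ ≤ x j := hx (Fin.le_def.mpr (by simp; omega))
      have h3 : x i ≤ x b := hx (Fin.le_def.mpr hib)
      have h4 := abs_le.mp hj
      linarith
    exact ⟨⟨(j : ℕ) - (a : ℕ), by omega⟩, Fin.ext (by show (a : ℕ) + ((j : ℕ) - (a : ℕ)) = j; omega)⟩
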